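/- arXiv:2011.06150 — 3 statements merged into one kernel-verified Lean document; each statement's English description precedes it below -/
import Mathlib

section
/- Consider m machines and b cliques V_1, …, V_b, each clique containing exactly m jobs, and any assignment of all jobs to machines such that every machine receives exactly b jobs (one per 'layer' position 1,…,b). Fix i ∈ [m]. Construct the bipartite graph whose left vertices are the cliques V_1,…,V_b, right vertices are the layers 1,…,b, with an edge between clique V_k and layer ℓ iff some job of V_k is assigned at position ℓ on one of the machines m_i,…,m_m. Then this bipartite graph has a perfect matching. -/
/-- Clique/layer bipartite matching: with `m` machines and `b` cliques, where
`clique μ ℓ` is the clique of the job in position (layer) `ℓ` on machine `μ`,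
if each machine before `i` has exactly one job of each clique (the map
`ℓ ↦ clique μ ℓ` is bijective), and each clique has exactly `m` jobs in total,
then the bipartite graph on cliques and layers with an edge between clique `k`
and layer `ℓ` iff some machine `μ ≥ i` has a job of clique `k` in layer `ℓ`
has a perfect matching. -/
theorem clique_layer_perfect_matching
    (m b : ℕ) (i : Fin m)
    (clique : Fin m → Fin b → Fin b)
    (hbefore : ∀ μ : Fin m, μ < i → Function.Bijective (clique μ))
    (htotal : ∀ k : Fin b,
      (Finset.univ.filter (fun q : Fin m × Fin b => clique q.1 q.2 = k)).card = m) :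
    ∃ f : Fin b → Fin b, Function.Bijective f ∧
      ∀ k : Fin b, ∃ μ : Fin m, i ≤ μ ∧ clique μ (f k) = k := by
  classical
  set t : Fin b → Finset (Fin b) :=
    fun k => Finset.univ.filter (fun ℓ => ∃ μ : Fin m, i ≤ μ ∧ clique μ ℓ = k) with ht
  -- count of pairs with μ < i and clique μ ℓ = k is i
  have hlt : ∀ k : Fin b,
      (Finset.univ.filter (fun q : Fin m × Fin b => q.1 < i ∧ clique q.1 q.2 = k)).card
        = (i : ℕ) := by
    intro k
    rw [← Fin.card_Iio (b := i)]
    apply Finset.card_bij (fun q _ => q.1)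
    · intro q hq
      simp only [Finset.mem_filter, Finset.mem_univ, true_and] at hq
      simpa [Finset.mem_Iio] using hq.1
    · intro q hq q' hq'
      simp only [Finset.mem_filter, Finset.mem_univ, true_and] at hq hq'
      intro h
      have hinj := (hbefore q.1 hq.1).1
      ext
      · exact congrArg Fin.val h
      · have : clique q.1 q.2 = clique q.1 q'.2 := by
          rw [hq.2, h, hq'.2]
        exact congrArg Fin.val (hinj this)
    · intro μ hμ
      simp only [Finset.mem_Iio] at hμ
      obtain ⟨ℓ, hℓ⟩ := (hbefore μ hμ).2 k
      exact ⟨(μ, ℓ), by simp [hμ, hℓ], rfl⟩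
  -- count of pairs with i ≤ μ and clique μ ℓ = k is m - i
  have hge : ∀ k : Fin b,
      (Finset.univ.filter (fun q : Fin m × Fin b => i ≤ q.1 ∧ clique q.1 q.2 = k)).card
        = m - (i : ℕ) := by
    intro k
    have hsplit : (Finset.univ.filter (fun q : Fin m × Fin b => clique q.1 q.2 = k)).card
        = (Finset.univ.filter (fun q : Fin m × Fin b => q.1 < i ∧ clique q.1 q.2 = k)).card
          + (Finset.univ.filter (fun q : Fin m × Fin b => i ≤ q.1 ∧ clique q.1 q.2 = k)).card := by
      rw [← Finset.card_union_of_disjoint]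
      · congr 1
        ext q
        simp only [Finset.mem_filter, Finset.mem_union, Finset.mem_univ, true_and]
        constructor
        · intro h
          rcases lt_or_ge q.1 i with h' | h'
          · exact Or.inl ⟨h', h⟩
          · exact Or.inr ⟨h', h⟩
        · rintro (⟨_, h⟩ | ⟨_, h⟩) <;> exact h
      · rw [Finset.disjoint_left]
        intro q hq hq'
        simp only [Finset.mem_filter] at hq hq'
        exact absurd hq'.2.1 (not_le.mpr hq.2.1)
    rw [htotal k, hlt k] at hsplit
    omega
  have hicard : (Finset.univ.filter (fun μ : Fin m => i ≤ μ)).card = m - (i : ℕ) := by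
    have : (Finset.univ.filter (fun μ : Fin m => i ≤ μ)) = (Finset.Iio i)ᶜ := by
      ext μ; simp [not_lt]
    rw [this, Finset.card_compl, Fin.card_Iio, Fintype.card_fin]
  have hpos : 0 < m - (i : ℕ) := by omega
  -- Hall's condition
  have hall : ∀ S : Finset (Fin b), S.card ≤ (S.biUnion t).card := by
    intro S
    set T : Finset (Fin m × Fin b) :=
      Finset.univ.filter (fun q => i ≤ q.1 ∧ clique q.1 q.2 ∈ S) with hT
    have hTcard : T.card = S.card * (m - (i : ℕ)) := by
      rw [Finset.card_eq_sum_card_fiberwise (s := T) (f := fun q => clique q.1 q.2) (t := S)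
        (fun q hq => (Finset.mem_filter.mp hq).2.2)]
      rw [Finset.sum_congr rfl (fun k hk => ?_), Finset.sum_const, smul_eq_mul]
      rw [← hge k]
      congr 1
      ext q
      simp only [hT, Finset.mem_filter, Finset.mem_univ, true_and]
      constructor
      · rintro ⟨⟨h1, _⟩, h3⟩; exact ⟨h1, h3⟩
      · rintro ⟨h1, h3⟩; exact ⟨⟨h1, h3 ▸ hk⟩, h3⟩
    have hsub : T ⊆ (Finset.univ.filter (fun μ : Fin m => i ≤ μ)) ×ˢ (S.biUnion t) := by
      intro q hq
      simp only [hT, Finset.mem_filter, Finset.mem_univ, true_and] at hq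
      simp only [Finset.mem_product, Finset.mem_filter, Finset.mem_univ, true_and,
        Finset.mem_biUnion]
      exact ⟨hq.1, clique q.1 q.2, hq.2, by simp [ht]; exact ⟨q.1, hq.1, rfl⟩⟩
    have := Finset.card_le_card hsub
    rw [Finset.card_product, hicard, hTcard] at this
    rw [mul_comm (m - (i : ℕ))] at this
    exact Nat.le_of_mul_le_mul_right this hpos
  obtain ⟨f, hfinj, hf⟩ :=
    (Finset.all_card_le_biUnion_card_iff_existsInjective' t).mp hall
  refine ⟨f, (Finite.injective_iff_bijective).mp hfinj, fun k => ?_⟩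
  have := hf k
  simp only [ht, Finset.mem_filter, Finset.mem_univ, true_and] at this
  exact this
end

section
/- The minimum total completion time of n jobs on m identical machines with an incompatibility graph that is a disjoint union of cliques each of size at most m equals the minimum total completion time without any incompatibility constraints. (Adding clique incompatibilities, where each clique has at most m jobs, does not increase the optimal total completion time on identical machines.) -/
/-- An `m`-regular ℕ-matrix on finite types decomposes into `m` permutation matrices. -/
theorem regular_decomp (m : ℕ) {α β : Type} [Fintype α] [Fintype β]
    [DecidableEq α] [DecidableEq β] (M : α → β → ℕ)
    (hrow : ∀ a, ∑ bb, M a bb = m) (hcol : ∀ bb, ∑ a, M a bb = m) :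
    ∃ σ : Fin m → (α ≃ β), ∀ a bb,
      M a bb = (Finset.univ.filter (fun k : Fin m => σ k a = bb)).card := by
  induction m generalizing M with
  | zero =>
    refine ⟨Fin.elim0, fun a bb => ?_⟩
    have h1 : M a bb ≤ ∑ b', M a b' := Finset.single_le_sum (fun _ _ => Nat.zero_le _) (Finset.mem_univ _)
    rw [hrow a] at h1
    simp [Nat.le_zero.mp h1]
  | succ m ih =>
    -- Hall's condition
    set t : α → Finset β := fun a => Finset.univ.filter (fun bb => 0 < M a bb) with ht
    have hall : ∀ s : Finset α, s.card ≤ (s.biUnion t).card := by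
      intro s
      have key : (m+1) * s.card ≤ (m+1) * (s.biUnion t).card := by
        calc (m+1) * s.card = ∑ a ∈ s, (m+1) := by rw [Finset.sum_const, smul_eq_mul, mul_comm]
        _ = ∑ a ∈ s, ∑ bb, M a bb := by simp [hrow]
        _ = ∑ bb, ∑ a ∈ s, M a bb := Finset.sum_comm
        _ = ∑ bb ∈ s.biUnion t, ∑ a ∈ s, M a bb := by
            refine (Finset.sum_subset (Finset.subset_univ _) ?_).symm
            intro bb _ hbb
            refine Finset.sum_eq_zero fun a ha => ?_
            by_contra hz
            exact hbb (Finset.mem_biUnion.mpr ⟨a, ha, by simp [ht, Nat.pos_of_ne_zero hz]⟩)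
        _ ≤ ∑ bb ∈ s.biUnion t, ∑ a, M a bb := by
            refine Finset.sum_le_sum fun bb _ => ?_
            exact Finset.sum_le_sum_of_subset (Finset.subset_univ s)
        _ = ∑ bb ∈ s.biUnion t, (m+1) := by simp [hcol]
        _ = (m+1) * (s.biUnion t).card := by rw [Finset.sum_const, smul_eq_mul, mul_comm]
      exact Nat.le_of_mul_le_mul_left key (Nat.succ_pos m)
    obtain ⟨f, hfinj, hf⟩ := (Finset.all_card_le_biUnion_card_iff_exists_injective t).mp hall
    have hcard : Fintype.card α = Fintype.card β := by
      have h1 : ∑ a, ∑ bb, M a bb = (m+1) * Fintype.card α := by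
        simp [hrow, Finset.sum_const, mul_comm]
      have h2 : ∑ a, ∑ bb, M a bb = (m+1) * Fintype.card β := by
        rw [Finset.sum_comm]; simp [hcol, Finset.sum_const, mul_comm]
      have := h1.symm.trans h2
      exact Nat.eq_of_mul_eq_mul_left (Nat.succ_pos m) this
    have hbij : Function.Bijective f :=
      (Fintype.bijective_iff_injective_and_card f).mpr ⟨hfinj, hcard⟩
    set τ : α ≃ β := Equiv.ofBijective f hbij with hτ
    have hτf : ∀ a, τ a = f a := fun a => rfl
    have hpos : ∀ a, 1 ≤ M a (τ a) := by
      intro a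
      have := hf a
      rw [ht] at this
      exact (Finset.mem_filter.mp this).2
    set M₂ : α → β → ℕ := fun a bb => M a bb - (if τ a = bb then 1 else 0) with hM₂
    have hrow₂ : ∀ a, ∑ bb, M₂ a bb = m := by
      intro a
      have hsplit := Finset.add_sum_erase Finset.univ (M₂ a) (Finset.mem_univ (τ a))
      have hsplit' := Finset.add_sum_erase Finset.univ (M a) (Finset.mem_univ (τ a))
      have he : ∑ bb ∈ Finset.univ.erase (τ a), M₂ a bb
          = ∑ bb ∈ Finset.univ.erase (τ a), M a bb := by
        refine Finset.sum_congr rfl fun bb hbb => ?_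
        have : τ a ≠ bb := fun h => (Finset.mem_erase.mp hbb).1 h.symm
        simp [hM₂, this]
      have hv : M₂ a (τ a) = M a (τ a) - 1 := by simp [hM₂]
      have := hpos a
      rw [hrow a] at hsplit'
      omega
    have hcol₂ : ∀ bb, ∑ a, M₂ a bb = m := by
      intro bb
      have hsplit := Finset.add_sum_erase Finset.univ (fun a => M₂ a bb) (Finset.mem_univ (τ.symm bb))
      have hsplit' := Finset.add_sum_erase Finset.univ (fun a => M a bb) (Finset.mem_univ (τ.symm bb))
      have he : ∑ a ∈ Finset.univ.erase (τ.symm bb), M₂ a bb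
          = ∑ a ∈ Finset.univ.erase (τ.symm bb), M a bb := by
        refine Finset.sum_congr rfl fun a ha => ?_
        have hne : τ a ≠ bb := by
          intro h
          exact (Finset.mem_erase.mp ha).1 (by rw [← h, Equiv.symm_apply_apply])
        simp [hM₂, hne]
      have hv : M₂ (τ.symm bb) bb = M (τ.symm bb) bb - 1 := by
        simp [hM₂, Equiv.apply_symm_apply]
      have hp : 1 ≤ M (τ.symm bb) bb := by
        have := hpos (τ.symm bb); rwa [Equiv.apply_symm_apply] at this
      rw [hcol bb] at hsplit'
      omega
    obtain ⟨σ', hσ'⟩ := ih M₂ hrow₂ hcol₂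
    refine ⟨Fin.cases τ σ', fun a bb => ?_⟩
    rw [Finset.card_filter]
    rw [Fin.sum_univ_succ]
    simp only [Fin.cases_zero, Fin.cases_succ]
    have e := hσ' a bb
    rw [Finset.card_filter] at e
    show M a bb = (if τ a = bb then 1 else 0) + ∑ i, if (σ' i) a = bb then 1 else 0
    rw [← e]
    have := hpos a
    by_cases h : τ a = bb
    · subst h; simp [hM₂]; omega
    · simp [h, hM₂]

theorem exists_proper_coloring (m : ℕ) {J A B : Type} [Fintype J] [Fintype A] [Fintype B]
    [DecidableEq J] [DecidableEq A] [DecidableEq B] (f : J → A) (g : J → B)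
    (hf : ∀ a, (Finset.univ.filter (fun j => f j = a)).card ≤ m)
    (hg : ∀ bb, (Finset.univ.filter (fun j => g j = bb)).card ≤ m) :
    ∃ c : J → Fin m, ∀ j j' : J, j ≠ j' → (f j = f j' ∨ g j = g j') → c j ≠ c j' := by
  classical
  set F : A → B → Finset J := fun a bb => Finset.univ.filter (fun j => f j = a ∧ g j = bb)
    with hF
  set M : A → B → ℕ := fun a bb => (F a bb).card with hMdef
  set R : A → ℕ := fun a => (Finset.univ.filter (fun j => f j = a)).card with hR
  set C : B → ℕ := fun bb => (Finset.univ.filter (fun j => g j = bb)).card with hC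
  have hRsum : ∀ a, ∑ bb, M a bb = R a := by
    intro a
    simp only [hR]
    rw [Finset.card_eq_sum_card_fiberwise (f := g) (t := Finset.univ) (fun j _ => Finset.mem_univ _)]
    refine Finset.sum_congr rfl fun bb _ => ?_
    simp only [hMdef, hF]
    congr 1
    ext j
    simp [Finset.mem_filter, and_comm]
  have hCsum : ∀ bb, ∑ a, M a bb = C bb := by
    intro bb
    simp only [hC]
    rw [Finset.card_eq_sum_card_fiberwise (f := f) (t := Finset.univ) (fun j _ => Finset.mem_univ _)]
    refine Finset.sum_congr rfl fun a _ => ?_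
    simp only [hMdef, hF]
    congr 1
    ext j
    simp [Finset.mem_filter, and_comm]
  have hfR : ∀ a, R a ≤ m := hf
  have hgC : ∀ bb, C bb ≤ m := hg
  set M' : (A ⊕ B) → (B ⊕ A) → ℕ := fun x y =>
    match x, y with
    | Sum.inl a, Sum.inl bb => M a bb
    | Sum.inl a, Sum.inr a' => if a = a' then m - R a else 0
    | Sum.inr b', Sum.inl bb => if bb = b' then m - C bb else 0
    | Sum.inr b', Sum.inr a => M a b'
    with hM'
  have hrow : ∀ x, ∑ y, M' x y = m := by
    intro x
    cases x with
    | inl a =>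
      rw [Fintype.sum_sum_type]
      simp only [hM']
      rw [Finset.sum_ite_eq Finset.univ a (fun _ => m - R a), hRsum a]
      have := hfR a
      simp
      omega
    | inr b' =>
      rw [Fintype.sum_sum_type]
      simp only [hM']
      rw [Finset.sum_ite_eq' Finset.univ b' (fun bb => m - C bb), hCsum b']
      have := hgC b'
      simp
      omega
  have hcol : ∀ y, ∑ x, M' x y = m := by
    intro y
    cases y with
    | inl bb =>
      rw [Fintype.sum_sum_type]
      simp only [hM']
      rw [Finset.sum_ite_eq Finset.univ bb (fun _ => m - C bb), hCsum bb]
      have := hgC bb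
      simp
      omega
    | inr a' =>
      rw [Fintype.sum_sum_type]
      simp only [hM']
      rw [Finset.sum_ite_eq' Finset.univ a' (fun a => m - R a), hRsum a']
      have := hfR a'
      simp
      omega
  obtain ⟨σ, hσ⟩ := regular_decomp m M' hrow hcol
  set K : A → B → Finset (Fin m) := fun a bb =>
    Finset.univ.filter (fun k => σ k (Sum.inl a) = Sum.inl bb) with hK
  have hcards : ∀ a bb, (F a bb).card = (K a bb).card := fun a bb => hσ (Sum.inl a) (Sum.inl bb)
  set e : (a : A) → (bb : B) → ({x // x ∈ F a bb} ≃ {x // x ∈ K a bb}) :=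
    fun a bb => Finset.equivOfCardEq (hcards a bb) with he
  have hmemF : ∀ j : J, j ∈ F (f j) (g j) := by intro j; simp [hF]
  set c : J → Fin m := fun j => ↑(e (f j) (g j) ⟨j, hmemF j⟩) with hc
  have c_eq : ∀ (a : A) (bb : B) (j : J) (h : j ∈ F a bb), c j = ↑(e a bb ⟨j, h⟩) := by
    intro a bb j h
    have h' := h
    rw [hF] at h'
    obtain ⟨h1, h2⟩ := (Finset.mem_filter.mp h').2
    subst h1; subst h2
    rfl
  have hmemK : ∀ j : J, σ (c j) (Sum.inl (f j)) = Sum.inl (g j) := by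
    intro j
    have h2 : c j ∈ Finset.univ.filter (fun k => σ k (Sum.inl (f j)) = Sum.inl (g j)) :=
      (e (f j) (g j) ⟨j, hmemF j⟩).2
    exact (Finset.mem_filter.mp h2).2
  have hfiber : ∀ (a : A) (bb : B) (j j' : J), j ∈ F a bb → j' ∈ F a bb → c j = c j' → j = j' := by
    intro a bb j j' h h' hcc
    rw [c_eq a bb j h, c_eq a bb j' h'] at hcc
    have := (e a bb).injective (Subtype.ext hcc)
    exact congrArg Subtype.val this
  refine ⟨c, fun j j' hne hor hcc => ?_⟩
  have h1 := hmemK j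
  have h2 := hmemK j'
  rw [← hcc] at h2
  have hff : f j = f j' := by
    rcases hor with h | h
    · exact h
    · rw [← h] at h2
      exact Sum.inl.inj ((σ (c j)).injective (h1.trans h2.symm))
  have hgg : g j = g j' := by
    rw [← hff] at h2
    exact Sum.inl.inj (h1.symm.trans h2)
  have hj' : j' ∈ F (f j) (g j) := by simp [hF, hff.symm, hgg.symm]
  exact hne (hfiber (f j) (g j) j j' (hmemF j) hj' hcc)


lemma fin_strictMono_le {t n : ℕ} (f : Fin t → Fin n) (hf : StrictMono f) :
    ∀ k : Fin t, (k : ℕ) ≤ (f k : ℕ) := by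
  have : ∀ v (hv : v < t), v ≤ (f ⟨v, hv⟩ : ℕ) := by
    intro v
    induction v with
    | zero => intro hv; exact Nat.zero_le _
    | succ v ih =>
      intro hv
      have hv' : v < t := Nat.lt_of_succ_lt hv
      have hlt : (⟨v, hv'⟩ : Fin t) < ⟨v + 1, hv⟩ := by simp [Fin.lt_def]
      have h2 := hf hlt
      have h3 := ih hv'
      rw [Fin.lt_def] at h2
      omega
  intro k
  exact this k.1 k.2

lemma sum_smallest_le {n : ℕ} (q : Fin n → ℕ) (hq : Monotone q) (c : ℕ)
    (T : Finset (Fin n)) (hc : c ≤ T.card) :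
    ∑ i ∈ Finset.univ.filter (fun i : Fin n => (i : ℕ) < c), q i ≤ ∑ i ∈ T, q i := by
  classical
  set φ : Fin T.card → Fin n := fun k => ((T.orderIsoOfFin rfl) k : Fin n) with hφ
  have hφmono : StrictMono φ := fun a b hab => (T.orderIsoOfFin rfl).strictMono hab
  have hφle : ∀ k : Fin T.card, (k : ℕ) ≤ (φ k : ℕ) := fin_strictMono_le φ hφmono
  have hφmem : ∀ k, φ k ∈ T := fun k => ((T.orderIsoOfFin rfl) k).2
  set ψ : Fin n → Fin n := fun i => if h : (i : ℕ) < c then φ ⟨i, h.trans_le hc⟩ else i with hψ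
  have step1 : ∑ i ∈ Finset.univ.filter (fun i : Fin n => (i : ℕ) < c), q i
      ≤ ∑ i ∈ Finset.univ.filter (fun i : Fin n => (i : ℕ) < c), q (ψ i) := by
    refine Finset.sum_le_sum fun i hi => ?_
    have h : (i : ℕ) < c := (Finset.mem_filter.mp hi).2
    refine hq ?_
    simp only [hψ, dif_pos h]
    exact Fin.le_def.mpr (hφle ⟨i, h.trans_le hc⟩)
  have hinj : Set.InjOn ψ (Finset.univ.filter (fun i : Fin n => (i : ℕ) < c)) := by
    intro i hi i' hi' heq
    have h : (i : ℕ) < c := (Finset.mem_filter.mp hi).2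
    have h' : (i' : ℕ) < c := (Finset.mem_filter.mp hi').2
    simp only [hψ, dif_pos h, dif_pos h'] at heq
    have h2 := hφmono.injective heq
    rw [Fin.mk_eq_mk] at h2
    exact Fin.ext h2
  have step2 : ∑ i ∈ Finset.univ.filter (fun i : Fin n => (i : ℕ) < c), q (ψ i)
      = ∑ j ∈ (Finset.univ.filter (fun i : Fin n => (i : ℕ) < c)).image ψ, q j :=
    (Finset.sum_image (fun x hx y hy => hinj hx hy)).symm
  have step3 : (Finset.univ.filter (fun i : Fin n => (i : ℕ) < c)).image ψ ⊆ T := by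
    intro j hj
    obtain ⟨i, hi, rfl⟩ := Finset.mem_image.mp hj
    have h : (i : ℕ) < c := (Finset.mem_filter.mp hi).2
    simp only [hψ, dif_pos h]
    exact hφmem _
  calc _ ≤ _ := step1
    _ = _ := step2
    _ ≤ ∑ i ∈ T, q i := Finset.sum_le_sum_of_subset step3


lemma sum_mul_layers {n : ℕ} (p w : Fin n → ℕ) (hw : ∀ j, w j ≤ n) :
    ∑ j, w j * p j
      = ∑ k ∈ Finset.range n, ∑ j ∈ Finset.univ.filter (fun j => k + 1 ≤ w j), p j := by
  classical
  have h1 : ∀ k, ∑ j ∈ Finset.univ.filter (fun j => k + 1 ≤ w j), p j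
      = ∑ j : Fin n, if k + 1 ≤ w j then p j else 0 := fun k => Finset.sum_filter _ _
  simp only [h1]
  rw [Finset.sum_comm]
  refine Finset.sum_congr rfl fun j _ => ?_
  have h2 : (Finset.range n).filter (fun k => k + 1 ≤ w j) = Finset.range (w j) := by
    ext a
    simp only [Finset.mem_filter, Finset.mem_range]
    have := hw j
    omega
  rw [← Finset.sum_filter, h2, Finset.sum_const, Finset.card_range, smul_eq_mul]

lemma lower_bound {n m : ℕ} (hm : 0 < m) (p : Fin n → ℕ)
    (mach : Fin n → Fin m) (pos : Fin n → ℕ)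
    (hinj : ∀ j j' : Fin n, mach j = mach j' → pos j = pos j' → j = j') :
    ∑ j : Fin n, ((n - 1 - ((Tuple.sort p).symm j : ℕ)) / m + 1) * p j
      ≤ ∑ j : Fin n, (Finset.univ.filter (fun j' : Fin n =>
          mach j' = mach j ∧ pos j ≤ pos j')).card * p j := by
  classical
  set σ := Tuple.sort p with hσ
  have hq : Monotone (p ∘ σ) := Tuple.monotone_sort p
  set mult : Fin n → ℕ := fun j =>
    (Finset.univ.filter (fun j' : Fin n => mach j' = mach j ∧ pos j ≤ pos j')).card with hmult
  set lev : Fin n → ℕ := fun j => (n - 1 - (σ.symm j : ℕ)) / m with hlev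
  have hlevle : ∀ j, lev j + 1 ≤ n := by
    intro j
    have h1 : (n - 1 - (σ.symm j : ℕ)) / m ≤ n - 1 - (σ.symm j : ℕ) := Nat.div_le_self _ _
    have h2 : (σ.symm j : ℕ) < n := (σ.symm j).2
    simp only [hlev]
    omega
  have hmultpos : ∀ j, 1 ≤ mult j := by
    intro j
    refine Finset.card_pos.mpr ⟨j, ?_⟩
    simp [hmult]
  have hmultle : ∀ j, mult j ≤ n := by
    intro j
    simpa [hmult] using (Finset.card_filter_le Finset.univ
      (fun j' : Fin n => mach j' = mach j ∧ pos j ≤ pos j'))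
  have hlt : ∀ j j' : Fin n, mach j = mach j' → pos j < pos j' → mult j' < mult j := by
    intro j j' hmm hpp
    refine Finset.card_lt_card ?_
    constructor
    · intro x hx
      simp only [hmult, Finset.mem_filter, Finset.mem_univ, true_and] at hx ⊢
      exact ⟨hx.1.trans hmm.symm, le_of_lt (lt_of_lt_of_le hpp hx.2)⟩
    · intro hsub
      have hj : j ∈ Finset.univ.filter (fun x : Fin n => mach x = mach j ∧ pos j ≤ pos x) := by
        simp
      have := hsub hj
      simp only [Finset.mem_filter, Finset.mem_univ, true_and] at this
      omega
  have hinjml : ∀ j j' : Fin n, mach j = mach j' → mult j = mult j' → j = j' := by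
    intro j j' h1 h2
    rcases lt_trichotomy (pos j) (pos j') with h | h | h
    · have := hlt j j' h1 h; omega
    · exact hinj j j' h1 h
    · have := hlt j' j h1.symm h; omega
  have hlayer : ∀ k : ℕ, (Finset.univ.filter (fun j : Fin n => mult j ≤ k)).card ≤ m * k := by
    intro k
    have := Finset.card_le_card_of_injOn (fun j => (mach j, mult j))
      (s := Finset.univ.filter (fun j : Fin n => mult j ≤ k))
      (t := (Finset.univ : Finset (Fin m)) ×ˢ Finset.Icc 1 k)
      (fun j hj => by
        simp only [Finset.mem_coe, Finset.mem_filter] at hj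
        simp only [Finset.mem_coe, Finset.mem_product, Finset.mem_univ, Finset.mem_Icc, true_and]
        exact ⟨hmultpos j, hj.2⟩)
      (fun x hx y hy hxy => by
        simp only [Prod.mk.injEq] at hxy
        exact hinjml x y hxy.1 hxy.2)
    simpa [Nat.card_Icc] using this
  have hAcard : ∀ k : ℕ, n - m * k
      ≤ (Finset.univ.filter (fun j : Fin n => k + 1 ≤ mult j)).card := by
    intro k
    have hsplit := Finset.card_filter_add_card_filter_not
      (s := (Finset.univ : Finset (Fin n))) (p := fun j : Fin n => k + 1 ≤ mult j)
    have h2 : (Finset.univ.filter (fun j : Fin n => ¬ (k + 1 ≤ mult j))).card ≤ m * k := by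
      have : (Finset.univ.filter (fun j : Fin n => ¬ (k + 1 ≤ mult j)))
          = (Finset.univ.filter (fun j : Fin n => mult j ≤ k)) := by
        ext j; simp
      rw [this]; exact hlayer k
    have h3 : (Finset.univ : Finset (Fin n)).card = n := by simp
    omega
  -- per-layer inequality
  have hperlayer : ∀ k : ℕ,
      ∑ j ∈ Finset.univ.filter (fun j : Fin n => k + 1 ≤ lev j + 1), p j
        ≤ ∑ j ∈ Finset.univ.filter (fun j : Fin n => k + 1 ≤ mult j), p j := by
    intro k
    -- LHS equals sum over bottom segment
    have hLHS : ∑ j ∈ Finset.univ.filter (fun j : Fin n => k + 1 ≤ lev j + 1), p j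
        = ∑ i ∈ Finset.univ.filter (fun i : Fin n => (i : ℕ) < n - m * k), (p ∘ σ) i := by
      refine (Finset.sum_nbij' (fun i => σ i) (fun j => σ.symm j) ?_ ?_ ?_ ?_ ?_).symm
      · intro i hi
        simp only [Finset.mem_filter, Finset.mem_univ, true_and] at hi ⊢
        have hlevσ : lev (σ i) = (n - 1 - (i : ℕ)) / m := by
          simp [hlev, Equiv.symm_apply_apply]
        rw [hlevσ]
        have h2 : (i : ℕ) < n := i.2
        have h3 : k ≤ (n - 1 - (i : ℕ)) / m ↔ k * m ≤ n - 1 - (i : ℕ) :=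
          Nat.le_div_iff_mul_le hm
        rw [Nat.mul_comm k m] at h3
        omega
      · intro j hj
        simp only [Finset.mem_filter, Finset.mem_univ, true_and] at hj ⊢
        have h2 : ((σ.symm j : Fin n) : ℕ) < n := (σ.symm j).2
        have h3 : k ≤ (n - 1 - ((σ.symm j : Fin n) : ℕ)) / m ↔
            k * m ≤ n - 1 - ((σ.symm j : Fin n) : ℕ) := Nat.le_div_iff_mul_le hm
        rw [Nat.mul_comm k m] at h3
        simp only [hlev] at hj
        omega
      · intro i _; exact σ.symm_apply_apply i
      · intro j _; exact σ.apply_symm_apply j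
      · intro i _; rfl
    rw [hLHS]
    -- RHS via image
    set T : Finset (Fin n) :=
      (Finset.univ.filter (fun j : Fin n => k + 1 ≤ mult j)).image σ.symm with hT
    have hTcard : n - m * k ≤ T.card := by
      rw [hT, Finset.card_image_of_injective _ σ.symm.injective]
      have := hAcard k
      omega
    have hRHS : ∑ i ∈ T, (p ∘ σ) i
        = ∑ j ∈ Finset.univ.filter (fun j : Fin n => k + 1 ≤ mult j), p j := by
      rw [hT, Finset.sum_image (fun x _ y _ h => σ.symm.injective h)]
      refine Finset.sum_congr rfl fun j _ => ?_
      simp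
    rw [← hRHS]
    exact sum_smallest_le (p ∘ σ) hq (n - m * k) T hTcard
  rw [sum_mul_layers p (fun j => lev j + 1) hlevle,
    sum_mul_layers p mult hmultle]
  exact Finset.sum_le_sum fun k _ => hperlayer k

lemma upper_bound {n m b : ℕ} (hm : 0 < m) (p : Fin n → ℕ) (clique : Fin n → Fin b)
    (hsize : ∀ c : Fin b, (Finset.univ.filter (fun j : Fin n => clique j = c)).card ≤ m) :
    ∃ (mach : Fin n → Fin m) (pos : Fin n → ℕ),
      (∀ j j' : Fin n, mach j = mach j' → pos j = pos j' → j = j') ∧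
      (∀ j j' : Fin n, j ≠ j' → clique j = clique j' → mach j ≠ mach j') ∧
      ∑ j : Fin n, (Finset.univ.filter (fun j' : Fin n =>
          mach j' = mach j ∧ pos j ≤ pos j')).card * p j
        ≤ ∑ j : Fin n, ((n - 1 - ((Tuple.sort p).symm j : ℕ)) / m + 1) * p j := by
  classical
  set σ := Tuple.sort p with hσ
  set lev : Fin n → ℕ := fun j => (n - 1 - (σ.symm j : ℕ)) / m with hlev
  have hlevlt : ∀ j, lev j < n := by
    intro j
    have h1 : (n - 1 - (σ.symm j : ℕ)) / m ≤ n - 1 - (σ.symm j : ℕ) := Nat.div_le_self _ _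
    have h2 : (σ.symm j : ℕ) < n := (σ.symm j).2
    simp only [hlev]
    omega
  set lev' : Fin n → Fin n := fun j => ⟨lev j, hlevlt j⟩ with hlev'
  have hlevcard : ∀ a : Fin n, (Finset.univ.filter (fun j => lev' j = a)).card ≤ m := by
    intro a
    have := Finset.card_le_card_of_injOn (fun j : Fin n => (n - 1 - (σ.symm j : ℕ)) % m)
      (s := Finset.univ.filter (fun j => lev' j = a)) (t := Finset.range m)
      (fun j _ => Finset.mem_range.mpr (Nat.mod_lt _ hm))
      (fun x hx y hy hxy => by
        simp only [Finset.coe_filter, Set.mem_setOf_eq, hlev'] at hx hy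
        have hdx := Nat.div_add_mod (n - 1 - (σ.symm x : ℕ)) m
        have hdy := Nat.div_add_mod (n - 1 - (σ.symm y : ℕ)) m
        have hxv : ((n - 1 - (σ.symm x : ℕ)) / m : ℕ) = (a : ℕ) := congrArg Fin.val hx.2
        have hyv : ((n - 1 - (σ.symm y : ℕ)) / m : ℕ) = (a : ℕ) := congrArg Fin.val hy.2
        have hxy' : (n - 1 - (σ.symm x : ℕ)) % m = (n - 1 - (σ.symm y : ℕ)) % m := hxy
        have h1 : (n - 1 - (σ.symm x : ℕ)) = (n - 1 - (σ.symm y : ℕ)) := by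
          rw [← hdx, ← hdy, hxv, hyv, hxy']
        have h2 : ((σ.symm x : Fin n) : ℕ) < n := (σ.symm x).2
        have h3 : ((σ.symm y : Fin n) : ℕ) < n := (σ.symm y).2
        have h4 : ((σ.symm x : Fin n) : ℕ) = ((σ.symm y : Fin n) : ℕ) := by omega
        have h5 : σ.symm x = σ.symm y := Fin.ext h4
        exact σ.symm.injective h5)
    simpa using this
  obtain ⟨c, hc⟩ := exists_proper_coloring m lev' clique hlevcard hsize
  refine ⟨c, fun j => n - lev j, ?_, ?_, ?_⟩
  · intro j j' h1 h2
    by_contra hne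
    have h2' : n - lev j = n - lev j' := h2
    have hl : lev j = lev j' := by
      have := hlevlt j; have := hlevlt j'; omega
    exact hc j j' hne (Or.inl (Fin.ext hl)) h1
  · intro j j' hne hcl
    exact hc j j' hne (Or.inr hcl)
  · refine Finset.sum_le_sum fun j _ => Nat.mul_le_mul_right _ ?_
    have hcard : (Finset.univ.filter (fun j' : Fin n =>
        c j' = c j ∧ n - lev j ≤ n - lev j')).card ≤ lev j + 1 := by
      have := Finset.card_le_card_of_injOn (fun j' : Fin n => lev j')
        (s := Finset.univ.filter (fun j' : Fin n => c j' = c j ∧ n - lev j ≤ n - lev j'))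
        (t := Finset.range (lev j + 1))
        (fun j' hj' => by
          simp only [Finset.mem_coe, Finset.mem_filter, Finset.mem_univ, true_and] at hj'
          have h1 := hlevlt j; have h2 := hlevlt j'
          refine Finset.mem_range.mpr ?_
          show lev j' < lev j + 1
          have h3 : n - lev j ≤ n - lev j' := hj'.2
          omega)
        (fun x hx y hy hxy => by
          simp only [Finset.coe_filter, Set.mem_setOf_eq] at hx hy
          by_contra hne
          exact hc x y hne (Or.inl (Fin.ext hxy)) (hx.2.1.trans hy.2.1.symm))
      simpa using this
    exact hcard


/-- On `m` identical machines, if the incompatibility graph is a disjoint union of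
cliques each of size at most `m`, the optimal total completion time with the clique
constraints equals the optimal total completion time without any constraints. -/
theorem clique_constraints_do_not_increase_optimum
    (n m b : ℕ) (hm : 0 < m)
    (p : Fin n → ℕ) (clique : Fin n → Fin b)
    (hsize : ∀ c : Fin b, (Finset.univ.filter (fun j : Fin n => clique j = c)).card ≤ m) :
    sInf {cost : ℕ | ∃ (mach : Fin n → Fin m) (pos : Fin n → ℕ),
        (∀ j j' : Fin n, mach j = mach j' → pos j = pos j' → j = j') ∧
        (∀ j j' : Fin n, j ≠ j' → clique j = clique j' → mach j ≠ mach j') ∧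
        cost = ∑ j : Fin n,
          (Finset.univ.filter (fun j' : Fin n =>
            mach j' = mach j ∧ pos j ≤ pos j')).card * p j}
    = sInf {cost : ℕ | ∃ (mach : Fin n → Fin m) (pos : Fin n → ℕ),
        (∀ j j' : Fin n, mach j = mach j' → pos j = pos j' → j = j') ∧
        cost = ∑ j : Fin n,
          (Finset.univ.filter (fun j' : Fin n =>
            mach j' = mach j ∧ pos j ≤ pos j')).card * p j} := by
  obtain ⟨mach₀, pos₀, hinj₀, hcl₀, hle₀⟩ := upper_bound hm p clique hsize
  set S₁ : Set ℕ := {cost : ℕ | ∃ (mach : Fin n → Fin m) (pos : Fin n → ℕ),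
        (∀ j j' : Fin n, mach j = mach j' → pos j = pos j' → j = j') ∧
        (∀ j j' : Fin n, j ≠ j' → clique j = clique j' → mach j ≠ mach j') ∧
        cost = ∑ j : Fin n,
          (Finset.univ.filter (fun j' : Fin n =>
            mach j' = mach j ∧ pos j ≤ pos j')).card * p j} with hS₁
  set S₂ : Set ℕ := {cost : ℕ | ∃ (mach : Fin n → Fin m) (pos : Fin n → ℕ),
        (∀ j j' : Fin n, mach j = mach j' → pos j = pos j' → j = j') ∧
        cost = ∑ j : Fin n,
          (Finset.univ.filter (fun j' : Fin n =>
            mach j' = mach j ∧ pos j ≤ pos j')).card * p j} with hS₂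
  set cost₀ : ℕ := ∑ j : Fin n, (Finset.univ.filter (fun j' : Fin n =>
      mach₀ j' = mach₀ j ∧ pos₀ j ≤ pos₀ j')).card * p j with hcost₀
  have h₁mem : cost₀ ∈ S₁ := ⟨mach₀, pos₀, hinj₀, hcl₀, rfl⟩
  have h₂mem : cost₀ ∈ S₂ := ⟨mach₀, pos₀, hinj₀, rfl⟩
  apply le_antisymm
  · have hne₂ : S₂.Nonempty := ⟨cost₀, h₂mem⟩
    obtain ⟨mach₂, pos₂, hinj₂, heq₂⟩ := Nat.sInf_mem hne₂
    calc sInf S₁ ≤ cost₀ := Nat.sInf_le h₁mem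
      _ ≤ ∑ j : Fin n, ((n - 1 - ((Tuple.sort p).symm j : ℕ)) / m + 1) * p j := hle₀
      _ ≤ sInf S₂ := by
          rw [heq₂]
          exact lower_bound hm p mach₂ pos₂ hinj₂
  · have hne₁ : S₁.Nonempty := ⟨cost₀, h₁mem⟩
    obtain ⟨mach₁, pos₁, hinj₁, _, heq₁⟩ := Nat.sInf_mem hne₁
    exact Nat.sInf_le ⟨mach₁, pos₁, hinj₁, heq₁⟩
end

section
/- Machine contribution identity for weighted completion times: let a machine process jobs of kinds 1,…,ϑ in Smith order π, with x_j jobs of kind j, each of processing time p_j > 0 and weight w_j ≥ 0, where ρ(j) = w_j/p_j satisfies ρ(π(1)) ≥ ρ(π(2)) ≥ … ≥ ρ(π(ϑ)) (set ρ(π(ϑ+1)) = 0). Define z_j = ∑_{ℓ=1}^{j} p_{π(ℓ)}·x_{π(ℓ)}. Then the sum of weighted completion times when jobs are processed consecutively in order π (jobs of the same kind consecutively) equals ∑_{j=1}^{ϑ} ( (1/2)·z_j²·(ρ(π(j)) − ρ(π(j+1))) + (1/2)·x_{π(j)}·p_{π(j)}·w_{π(j)} ). -/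
lemma gauss_sum_real (m : ℕ) :
    ∑ r ∈ Finset.range m, ((r : ℝ) + 1) = (m : ℝ) * ((m : ℝ) + 1) / 2 := by
  induction m with
  | zero => simp
  | succ n ih => rw [Finset.sum_range_succ, ih]; push_cast; ring

/-- Machine contribution identity for weighted completion times (Knop–Koutecký):
a machine processes, for each `j < ϑ`, `x (π j)` jobs of kind `π j` (processing
time `p (π j) > 0`, weight `w (π j) ≥ 0`) consecutively in Smith order
(`ρ(π 0) ≥ ρ(π 1) ≥ …` where `ρ j = w j / p j`, with `ρ(π ϑ) = 0` by convention).
Then the sum of weighted completion times equals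
`∑_j (½ z_j² (ρ(π j) - ρ(π (j+1))) + ½ x_{π j} p_{π j} w_{π j})`
with `z_j = ∑_{ℓ ≤ j} p_{π ℓ} x_{π ℓ}`. -/
theorem machine_contribution_identity
    (ϑ : ℕ) (p w : ℕ → ℝ) (x : ℕ → ℕ) (π : ℕ → ℕ)
    (hπ : Set.BijOn π (Set.Iio ϑ) (Set.Iio ϑ))
    (hp : ∀ j < ϑ, 0 < p j) (hw : ∀ j < ϑ, 0 ≤ w j)
    (hsort : ∀ j j' : ℕ, j ≤ j' → j' < ϑ →
      w (π j') / p (π j') ≤ w (π j) / p (π j)) :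
    ∑ j ∈ Finset.range ϑ, ∑ r ∈ Finset.range (x (π j)),
        w (π j) * ((∑ ℓ ∈ Finset.range j, p (π ℓ) * (x (π ℓ) : ℝ))
          + ((r : ℝ) + 1) * p (π j))
      = ∑ j ∈ Finset.range ϑ,
          ((1 / 2) * (∑ ℓ ∈ Finset.range (j + 1), p (π ℓ) * (x (π ℓ) : ℝ)) ^ 2
              * (w (π j) / p (π j)
                  - (if j + 1 < ϑ then w (π (j + 1)) / p (π (j + 1)) else 0))
            + (1 / 2) * (x (π j) : ℝ) * p (π j) * w (π j)) := by
  have hpπ : ∀ j < ϑ, p (π j) ≠ 0 := fun j hj => (hp _ (hπ.mapsTo hj)).ne'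
  set Z : ℕ → ℝ := fun j => ∑ ℓ ∈ Finset.range j, p (π ℓ) * (x (π ℓ) : ℝ) with hZ
  set ρ : ℕ → ℝ := fun j => w (π j) / p (π j) with hρ
  -- middle form
  have lhs_eq : ∀ j, ∑ r ∈ Finset.range (x (π j)),
      w (π j) * (Z j + ((r : ℝ) + 1) * p (π j))
      = w (π j) * (x (π j) : ℝ) * Z j
        + w (π j) * p (π j) * ((x (π j) : ℝ) * ((x (π j) : ℝ) + 1)) / 2 := by
    intro j
    have h0 : ∑ r ∈ Finset.range (x (π j)), w (π j) * (Z j + ((r : ℝ) + 1) * p (π j))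
        = ∑ r ∈ Finset.range (x (π j)), (w (π j) * Z j + w (π j) * p (π j) * ((r:ℝ)+1)) :=
      Finset.sum_congr rfl fun r _ => by ring
    rw [h0, Finset.sum_add_distrib, Finset.sum_const, ← Finset.mul_sum, gauss_sum_real,
      Finset.card_range, nsmul_eq_mul]
    ring
  calc ∑ j ∈ Finset.range ϑ, ∑ r ∈ Finset.range (x (π j)),
        w (π j) * (Z j + ((r : ℝ) + 1) * p (π j))
      = ∑ j ∈ Finset.range ϑ, (w (π j) * (x (π j) : ℝ) * Z j
        + w (π j) * p (π j) * ((x (π j) : ℝ) * ((x (π j) : ℝ) + 1)) / 2) := by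
        exact Finset.sum_congr rfl fun j _ => lhs_eq j
    _ = ∑ j ∈ Finset.range ϑ, ((1/2) * Z (j+1) ^ 2 * ρ j - (1/2) * Z j ^ 2 * ρ j
          + (1/2) * (x (π j) : ℝ) * p (π j) * w (π j)) := by
        refine Finset.sum_congr rfl fun j hj => ?_
        rw [Finset.mem_range] at hj
        have hZs : Z (j+1) = Z j + p (π j) * (x (π j) : ℝ) := Finset.sum_range_succ _ _
        have hpw : ρ j * p (π j) = w (π j) := div_mul_cancel₀ _ (hpπ j hj)
        have : (1/2) * Z (j+1) ^ 2 * ρ j - (1/2) * Z j ^ 2 * ρ j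
            = (ρ j * p (π j)) * (x (π j) : ℝ) * Z j
              + (1/2) * (ρ j * p (π j)) * p (π j) * (x (π j) : ℝ)^2 := by
          rw [hZs]; ring
        rw [this, hpw]; ring
    _ = ∑ j ∈ Finset.range ϑ,
          ((1 / 2) * Z (j + 1) ^ 2
              * (ρ j - (if j + 1 < ϑ then ρ (j + 1) else 0))
            + (1 / 2) * (x (π j) : ℝ) * p (π j) * w (π j)) := by
        have key : ∑ j ∈ Finset.range ϑ, (1/2) * Z j ^ 2 * ρ j
            = ∑ j ∈ Finset.range ϑ,
              (1/2) * Z (j+1) ^ 2 * (if j + 1 < ϑ then ρ (j+1) else 0) := by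
          set g : ℕ → ℝ := fun j => if j < ϑ then (1/2) * Z j ^ 2 * ρ j else 0 with hg
          have h1 : ∑ j ∈ Finset.range ϑ, (1/2) * Z j ^ 2 * ρ j
              = ∑ j ∈ Finset.range ϑ, g j :=
            Finset.sum_congr rfl fun j hj => by
              simp [hg, Finset.mem_range.mp hj]
          have h2 : ∀ j, (1/2) * Z (j+1) ^ 2 * (if j + 1 < ϑ then ρ (j+1) else 0)
              = g (j+1) := by
            intro j; by_cases h : j + 1 < ϑ <;> simp [hg, h]
          have h3 : ∑ j ∈ Finset.range (ϑ+1), g j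
              = (∑ j ∈ Finset.range ϑ, g (j+1)) + g 0 := Finset.sum_range_succ' g ϑ
          have h4 : ∑ j ∈ Finset.range (ϑ+1), g j
              = (∑ j ∈ Finset.range ϑ, g j) + g ϑ := Finset.sum_range_succ g ϑ
          have hg0 : g 0 = 0 := by simp [hg, hZ]
          have hgϑ : g ϑ = 0 := by simp [hg]
          have h5 : ∑ j ∈ Finset.range ϑ, g j = ∑ j ∈ Finset.range ϑ, g (j+1) := by
            have := h3.symm.trans h4
            rw [hg0, hgϑ, add_zero, add_zero] at this
            exact this.symm
          rw [h1, h5]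
          exact Finset.sum_congr rfl fun j _ => (h2 j).symm
        simp only [mul_sub, Finset.sum_add_distrib, Finset.sum_sub_distrib, key]
  done
end
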